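/- Sandwich bound (Proposition 6 analogue): Under the hypotheses that J̲* satisfies the under-estimate HJB inequality along the optimal trajectory from x, and that π̲ is an admissible policy, one has J̲*(x) ≤ J*(x) ≤ J^{π̲}(x). -/

import Mathlib

open MeasureTheory Set

/-- Proposition 6 analogue (sandwich bound): if `J̲*` satisfies the under-estimate HJB
inequality along the optimal trajectory from `x₀`, and `π̲` is an admissible policy,
then `J̲*(x₀) ≤ J*(x₀) ≤ J^{π̲}(x₀)`. -/
theorem sandwich_bound (n m : ℕ)
    (Junder : (Fin n → ℝ) → ℝ) (Junder' : (Fin n → ℝ) → ((Fin n → ℝ) →L[ℝ] ℝ))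
    (hJ : ∀ y, HasFDerivAt Junder (Junder' y) y)
    (l : (Fin n → ℝ) → (Fin m → ℝ) → ℝ)
    (f : (Fin n → ℝ) → (Fin m → ℝ) → (Fin n → ℝ))
    (U : Set (Fin m → ℝ)) (xd : Fin n → ℝ) (x₀ : Fin n → ℝ)
    (hJd : Junder xd = 0)
    (hHJB : ∀ y, ∀ u ∈ U, 0 ≤ l y u + Junder' y (f y u))
    -- admissible control signals from x₀ and their total costs; J*(x₀) = sInf (cost '' Adm)
    (Adm : Set (ℝ → (Fin m → ℝ))) (cost : (ℝ → (Fin m → ℝ)) → ℝ)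
    (hcost_nonneg : ∀ u ∈ Adm, 0 ≤ cost u)
    -- an optimal trajectory from x₀ achieving J*(x₀)
    (xstar : ℝ → (Fin n → ℝ)) (ustar : ℝ → (Fin m → ℝ))
    (hadm_star : ustar ∈ Adm) (hx0 : xstar 0 = x₀)
    (hodestar : ∀ t ∈ Ici (0:ℝ), HasDerivAt xstar (f (xstar t) (ustar t)) t)
    (hUstar : ∀ t ∈ Ici (0:ℝ), ustar t ∈ U)
    (hconvstar : Filter.Tendsto xstar Filter.atTop (nhds xd))
    (hintstar : IntegrableOn (fun t => l (xstar t) (ustar t)) (Ici 0))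
    (hopt : cost ustar = sInf (cost '' Adm))
    (hcost_star : cost ustar = ∫ t in Ici (0:ℝ), l (xstar t) (ustar t))
    -- π̲ is an admissible policy with cost J^{π̲}(x₀)
    (πunder : (Fin n → ℝ) → (Fin m → ℝ)) (xπ : ℝ → (Fin n → ℝ)) (Jπ : ℝ)
    (hadm_π : (fun t => πunder (xπ t)) ∈ Adm)
    (hJπ : Jπ = cost (fun t => πunder (xπ t))) :
    Junder x₀ ≤ sInf (cost '' Adm) ∧ sInf (cost '' Adm) ≤ Jπ := by

  have bdd : BddBelow (cost '' Adm) := ⟨0, by rintro _ ⟨u, hu, rfl⟩; exact hcost_nonneg u hu⟩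
  constructor
  · -- lower bound
    set g : ℝ → ℝ := fun t => Junder (xstar t) with hg
    have hgder : ∀ t ∈ Ici (0:ℝ), HasDerivAt g (Junder' (xstar t) (f (xstar t) (ustar t))) t := by
      intro t ht
      exact (hJ (xstar t)).comp_hasDerivAt t (hodestar t ht)
    -- For each T ≥ 0 : g 0 ≤ g T + ∫_0^T l
    have key : ∀ T ≥ (0:ℝ), g 0 ≤ g T + ∫ s in (0:ℝ)..T, l (xstar s) (ustar s) := by
      intro T hT
      have hcont : ContinuousOn g (Icc 0 T) := fun t ht =>
        ((hgder t ht.1).continuousAt).continuousWithinAt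
      have hderiv : ∀ x ∈ Ioo (0:ℝ) T, HasDerivWithinAt g
          (Junder' (xstar x) (f (xstar x) (ustar x))) (Ioi x) x := fun x hx =>
        (hgder x hx.1.le).hasDerivWithinAt
      have φint : IntegrableOn (fun s => -(l (xstar s) (ustar s))) (Icc 0 T) :=
        (hintstar.mono_set (Icc_subset_Ici_self)).neg
      have hφg : ∀ x ∈ Ioo (0:ℝ) T, -(l (xstar x) (ustar x)) ≤
          Junder' (xstar x) (f (xstar x) (ustar x)) := by
        intro x hx
        have := hHJB (xstar x) (ustar x) (hUstar x hx.1.le)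
        linarith
      have := intervalIntegral.integral_le_sub_of_hasDeriv_right_of_le hT hcont hderiv φint hφg
      rw [intervalIntegral.integral_neg] at this
      linarith
    have hconv : Filter.Tendsto g Filter.atTop (nhds 0) := by
      have := (hJ xd).continuousAt.tendsto.comp hconvstar
      rw [hJd] at this
      exact this
    have hintIoi : IntegrableOn (fun t => l (xstar t) (ustar t)) (Ioi 0) :=
      hintstar.mono_set Ioi_subset_Ici_self
    have hIcieq : (∫ t in Ici (0:ℝ), l (xstar t) (ustar t))
        = ∫ t in Ioi (0:ℝ), l (xstar t) (ustar t) := by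
      rw [MeasureTheory.integral_Ici_eq_integral_Ioi]
    have hconvI : Filter.Tendsto (fun T => ∫ s in (0:ℝ)..T, l (xstar s) (ustar s))
        Filter.atTop (nhds (∫ t in Ioi (0:ℝ), l (xstar t) (ustar t))) :=
      MeasureTheory.intervalIntegral_tendsto_integral_Ioi 0 hintIoi Filter.tendsto_id
    have hlim : Filter.Tendsto (fun T => g T + ∫ s in (0:ℝ)..T, l (xstar s) (ustar s))
        Filter.atTop (nhds (0 + ∫ t in Ioi (0:ℝ), l (xstar t) (ustar t))) :=
      hconv.add hconvI
    have hle : g 0 ≤ 0 + ∫ t in Ioi (0:ℝ), l (xstar t) (ustar t) := by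
      refine ge_of_tendsto hlim ?_
      filter_upwards [Filter.eventually_ge_atTop (0:ℝ)] with T hT using key T hT
    have : Junder x₀ ≤ ∫ t in Ioi (0:ℝ), l (xstar t) (ustar t) := by
      simpa [hg, hx0] using hle
    calc Junder x₀ ≤ ∫ t in Ioi (0:ℝ), l (xstar t) (ustar t) := this
      _ = cost ustar := by rw [hcost_star, hIcieq]
      _ = sInf (cost '' Adm) := hopt
  · rw [hJπ]
    exact csInf_le bdd ⟨_, hadm_π, rfl⟩
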